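/- Let p ∈ ℝ[x_1,…,x_d] be an RZ_{x⁰} polynomial of degree m with p(x⁰) > 0, and let 1 ≤ k ≤ m−1. Then the k-th Renegar derivative p^{(k)}_{x⁰} of p with respect to x⁰ is an RZ_{x⁰} polynomial and p^{(k)}_{x⁰}(x⁰) > 0. -/

import Mathlib

/-- A polynomial `p ∈ ℝ[x_1,…,x_d]` satisfies the real zero condition with respect to
`x⁰ ∈ ℝ^d` if for every `x ∈ ℝ^d`, every complex zero of the univariate polynomial
`t ↦ p(x⁰ + t·x)` is real. -/
def IsRZ {d : ℕ} (p : MvPolynomial (Fin d) ℝ) (x0 : Fin d → ℝ) : Prop :=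
  ∀ x : Fin d → ℝ, ∀ t : ℂ,
    MvPolynomial.aeval (fun i => (x0 i : ℂ) + t * (x i : ℂ)) p = 0 → t.im = 0

/-- The homogenization `P(X_0, X_1, …, X_d) = X_0^m · p(X_1/X_0, …, X_d/X_0)` of a
polynomial `p` of degree (at most) `m`; the variable `0 : Fin (d+1)` is the
homogenizing variable `X_0` and the variable `i.succ` corresponds to `x_i`. -/
noncomputable def homogenize {d : ℕ} (m : ℕ) (p : MvPolynomial (Fin d) ℝ) :
    MvPolynomial (Fin (d + 1)) ℝ :=
  ∑ k ∈ p.support,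
    MvPolynomial.monomial
      (Finsupp.mapDomain Fin.succ k + Finsupp.single 0 (m - k.sum fun _ e => e))
      (MvPolynomial.coeff k p)

/-- The `k`-th Renegar derivative of `p` (of degree `m`) with respect to `x⁰`:
`p^{(k)}_{x⁰}(x) = (d^k/ds^k) P(X + sX⁰)|_{s=0}` evaluated at `X = (1, x)`, where `P`
is the homogenization of `p` and `X⁰ = (1, x⁰)`. -/
noncomputable def renegarDeriv {d : ℕ} (m : ℕ) (p : MvPolynomial (Fin d) ℝ)
    (x0 : Fin d → ℝ) (k : ℕ) : MvPolynomial (Fin d) ℝ :=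
  MvPolynomial.aeval (Fin.cons (1 : MvPolynomial (Fin d) ℝ) MvPolynomial.X)
    (Polynomial.eval 0
      ((fun q => Polynomial.derivative q)^[k]
        (MvPolynomial.aeval
          (fun α => Polynomial.C (MvPolynomial.X α) +
            Polynomial.X * Polynomial.C (MvPolynomial.C (Fin.cons (1 : ℝ) x0 α)))
          (homogenize m p))))


open Polynomial

/-- All complex roots of `f` are real. -/
def RRpoly (f : Polynomial ℝ) : Prop :=
  ∀ z : ℂ, Polynomial.aeval z f = 0 → z.im = 0

namespace RenegarAux

lemma eval_prod_ne_zero (z : ℂ) (s : Multiset ℂ) (h : ∀ r ∈ s, z ≠ r) :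
    Polynomial.eval z ((s.map fun r => X - C r).prod) ≠ 0 := by
  induction s using Multiset.induction_on with
  | empty => simp
  | cons a s ih =>
    simp only [Multiset.map_cons, Multiset.prod_cons, eval_mul, eval_sub, eval_X, eval_C]
    exact mul_ne_zero (sub_ne_zero.mpr (h a (Multiset.mem_cons_self a s)))
      (ih fun r hr => h r (Multiset.mem_cons_of_mem hr))

lemma eval_derivative_prod (z : ℂ) (s : Multiset ℂ) (h : ∀ r ∈ s, z ≠ r) :
    Polynomial.eval z (Polynomial.derivative ((s.map fun r => X - C r).prod)) =
      Polynomial.eval z ((s.map fun r => X - C r).prod) *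
        ((s.map fun r => (z - r)⁻¹).sum) := by
  induction s using Multiset.induction_on with
  | empty => simp
  | cons a s ih =>
    have ha : z - a ≠ 0 := sub_ne_zero.mpr (h a (Multiset.mem_cons_self a s))
    have hs : ∀ r ∈ s, z ≠ r := fun r hr => h r (Multiset.mem_cons_of_mem hr)
    simp only [Multiset.map_cons, Multiset.prod_cons, Multiset.sum_cons, derivative_mul,
      derivative_sub, derivative_X, derivative_C, sub_zero, one_mul, eval_add, eval_mul,
      eval_sub, eval_X, eval_C, ih hs]
    field_simp

lemma sum_inv_im (z : ℂ) (s : Multiset ℂ) (h : ∀ r ∈ s, r.im = 0) :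
    ((s.map fun r => (z - r)⁻¹).sum).im =
      -z.im * ((s.map fun r => (Complex.normSq (z - r))⁻¹).sum) := by
  induction s using Multiset.induction_on with
  | empty => simp
  | cons a s ih =>
    simp only [Multiset.map_cons, Multiset.sum_cons, Complex.add_im,
      ih fun r hr => h r (Multiset.mem_cons_of_mem hr)]
    rw [Complex.inv_im]
    have : (z - a).im = z.im := by
      rw [Complex.sub_im, h a (Multiset.mem_cons_self a s), sub_zero]
    rw [this]
    field_simp
    ring

lemma sum_normSq_nonneg (z : ℂ) (s : Multiset ℂ) :
    0 ≤ ((s.map fun r => (Complex.normSq (z - r))⁻¹).sum) := by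
  induction s using Multiset.induction_on with
  | empty => simp
  | cons a s ih =>
    simp only [Multiset.map_cons, Multiset.sum_cons]
    have : 0 ≤ (Complex.normSq (z - a))⁻¹ := inv_nonneg.mpr (Complex.normSq_nonneg _)
    linarith

lemma sum_normSq_pos (z : ℂ) (s : Multiset ℂ) (hs : s ≠ 0) (h : ∀ r ∈ s, z ≠ r) :
    0 < ((s.map fun r => (Complex.normSq (z - r))⁻¹).sum) := by
  obtain ⟨a, ha⟩ := Multiset.exists_mem_of_ne_zero hs
  obtain ⟨t, rfl⟩ := Multiset.exists_cons_of_mem ha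
  simp only [Multiset.map_cons, Multiset.sum_cons]
  have h1 : 0 < (Complex.normSq (z - a))⁻¹ := by
    have : z - a ≠ 0 := sub_ne_zero.mpr (h a (Multiset.mem_cons_self a t))
    exact inv_pos.mpr (Complex.normSq_pos.mpr this)
  have := sum_normSq_nonneg z t
  linarith

lemma aeval_eq_eval_map (f : Polynomial ℝ) (z : ℂ) :
    Polynomial.aeval z f = Polynomial.eval z (f.map (algebraMap ℝ ℂ)) := by
  rw [Polynomial.aeval_def, Polynomial.eval_map]

/-- Gauss–Lucas-type statement: the derivative of a real polynomial with only real
roots has no non-real roots. -/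
lemma aeval_derivative_ne_zero (f : Polynomial ℝ) (hrr : RRpoly f) (hd : 1 ≤ f.natDegree)
    {z : ℂ} (hz : z.im ≠ 0) : Polynomial.aeval z (Polynomial.derivative f) ≠ 0 := by
  set F := f.map (algebraMap ℝ ℂ) with hF
  have hf0 : f ≠ 0 := fun h => by simp [h] at hd
  have hinj : Function.Injective (algebraMap ℝ ℂ) := (algebraMap ℝ ℂ).injective
  have hF0 : F ≠ 0 := (Polynomial.map_ne_zero_iff hinj).mpr hf0
  have hsplit : F.Splits := IsAlgClosed.splits F
  have hroots : ∀ r ∈ F.roots, r.im = 0 := by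
    intro r hr
    apply hrr
    rw [aeval_eq_eval_map]
    exact (Polynomial.isRoot_of_mem_roots hr)
  have hzr : ∀ r ∈ F.roots, z ≠ r := by
    intro r hr heq
    exact hz (heq ▸ hroots r hr)
  have hcard : F.roots ≠ 0 := by
    intro h0
    have h1 : F.natDegree = Multiset.card F.roots := by
      rw [hsplit.natDegree_eq_card_roots]
    have h2 : F.natDegree = f.natDegree := Polynomial.natDegree_map_eq_of_injective hinj f
    rw [h0] at h1
    simp [h2] at h1
    omega
  have hfac : F = C F.leadingCoeff * (F.roots.map fun a => X - C a).prod :=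
    hsplit.eq_prod_roots
  have key : Polynomial.eval z (Polynomial.derivative F) ≠ 0 := by
    rw [hfac, Polynomial.derivative_C_mul, eval_mul, eval_C]
    apply mul_ne_zero (Polynomial.leadingCoeff_ne_zero.mpr hF0)
    rw [eval_derivative_prod z _ hzr]
    apply mul_ne_zero (eval_prod_ne_zero z _ hzr)
    intro hsum
    have him := congrArg Complex.im hsum
    rw [sum_inv_im z _ hroots, Complex.zero_im] at him
    have hpos := sum_normSq_pos z F.roots hcard hzr
    have : -z.im * ((F.roots.map fun r => (Complex.normSq (z - r))⁻¹).sum) ≠ 0 :=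
      mul_ne_zero (neg_ne_zero.mpr hz) (ne_of_gt hpos)
    exact this him
  intro hcontra
  apply key
  rw [hF, Polynomial.derivative_map, ← aeval_eq_eval_map]
  exact hcontra

lemma RRpoly_derivative (f : Polynomial ℝ) (hrr : RRpoly f) (hd : 1 ≤ f.natDegree) :
    RRpoly (Polynomial.derivative f) := by
  intro z hz
  by_contra him
  exact aeval_derivative_ne_zero f hrr hd him hz

lemma natDegree_reflect_le (f : Polynomial ℝ) (N : ℕ) (h : f.natDegree ≤ N) :
    (Polynomial.reflect N f).natDegree ≤ N := by
  rw [Polynomial.natDegree_le_iff_coeff_eq_zero]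
  intro i hi
  rw [Polynomial.coeff_reflect, Polynomial.revAt_eq_self_of_lt hi]
  exact Polynomial.coeff_eq_zero_of_natDegree_lt (lt_of_le_of_lt h hi)

lemma eval_reflect {F : Polynomial ℂ} {N : ℕ} (h : F.natDegree ≤ N) {z : ℂ} (hz : z ≠ 0) :
    Polynomial.eval z (Polynomial.reflect N F) = z ^ N * Polynomial.eval z⁻¹ F := by
  have hdeg : (Polynomial.reflect N F).natDegree < N + 1 := by
    have : (Polynomial.reflect N F).natDegree ≤ N := by
      rw [Polynomial.natDegree_le_iff_coeff_eq_zero]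
      intro i hi
      rw [Polynomial.coeff_reflect, Polynomial.revAt_eq_self_of_lt hi]
      exact Polynomial.coeff_eq_zero_of_natDegree_lt (lt_of_le_of_lt h hi)
    omega
  rw [Polynomial.eval_eq_sum_range' hdeg,
    Polynomial.eval_eq_sum_range' (lt_of_le_of_lt h (Nat.lt_succ_self N)), Finset.mul_sum]
  rw [← Finset.sum_range_reflect]
  apply Finset.sum_congr rfl
  intro i hi
  rw [Finset.mem_range] at hi
  have hiN : i ≤ N := by omega
  rw [Polynomial.coeff_reflect, Polynomial.revAt_le (by omega : N + 1 - 1 - i ≤ N)]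
  have h1 : N + 1 - 1 - i = N - i := by omega
  have h2 : N - (N - i) = i := by omega
  rw [h1, h2]
  rw [pow_sub₀ z hz hiN, inv_pow]
  ring

lemma RRpoly_reflect (f : Polynomial ℝ) (N : ℕ) (h : f.natDegree ≤ N) (hrr : RRpoly f) :
    RRpoly (Polynomial.reflect N f) := by
  intro z hz
  by_cases hz0 : z = 0
  · simp [hz0]
  · rw [aeval_eq_eval_map, ← Polynomial.reflect_map] at hz
    have hFdeg : (f.map (algebraMap ℝ ℂ)).natDegree ≤ N := le_trans (Polynomial.natDegree_map_le) h
    rw [eval_reflect hFdeg hz0] at hz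
    rcases mul_eq_zero.mp hz with h1 | h2
    · exact absurd h1 (pow_ne_zero N hz0)
    · have : (z⁻¹).im = 0 := by
        apply hrr
        rw [aeval_eq_eval_map]
        exact h2
      have : z.im = 0 := by
        have hzz : z = (z⁻¹)⁻¹ := (inv_inv z).symm
        rw [hzz, Complex.inv_im, this]
        simp
      exact this

end RenegarAux

namespace RenegarAux

noncomputable def step1 (m' : ℕ) (f : Polynomial ℝ) : Polynomial ℝ :=
  Polynomial.reflect (m' - 1) (Polynomial.derivative (Polynomial.reflect m' f))

lemma step1_coeff (m' : ℕ) (f : Polynomial ℝ) (hm : 1 ≤ m') (hdeg : f.natDegree ≤ m') (j : ℕ) :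
    (step1 m' f).coeff j = ((m' - j : ℕ) : ℝ) * f.coeff j := by
  by_cases hj : j ≤ m' - 1
  · rw [step1, Polynomial.coeff_reflect, Polynomial.revAt_le hj, Polynomial.coeff_derivative,
      Polynomial.coeff_reflect]
    have h1 : m' - 1 - j + 1 = m' - j := by omega
    rw [h1, Polynomial.revAt_le (Nat.sub_le m' j)]
    have h2 : m' - (m' - j) = j := by omega
    rw [h2, mul_comm]
    norm_cast
    rw [h1]
  · have hj' : m' ≤ j := by omega
    have hz : ((m' - j : ℕ) : ℝ) = 0 := by
      rw [Nat.sub_eq_zero_of_le hj']; norm_num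
    have hd2 : (Polynomial.derivative (Polynomial.reflect m' f)).natDegree ≤ m' - 1 :=
      le_trans (Polynomial.natDegree_derivative_le _)
        (Nat.sub_le_sub_right (natDegree_reflect_le f m' hdeg) 1)
    rw [step1, Polynomial.coeff_reflect, Polynomial.revAt_eq_self_of_lt (by omega : m' - 1 < j),
      Polynomial.coeff_eq_zero_of_natDegree_lt (lt_of_le_of_lt hd2 (by omega : m' - 1 < j)),
      hz, zero_mul]

lemma step1_props (m' : ℕ) (f : Polynomial ℝ) (hm : 1 ≤ m') (h0 : f.coeff 0 ≠ 0)
    (hdeg : f.natDegree ≤ m') (hrr : RRpoly f) :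
    RRpoly (step1 m' f) ∧ (step1 m' f).natDegree ≤ m' - 1 := by
  have hg : RRpoly (Polynomial.reflect m' f) := RRpoly_reflect f m' hdeg hrr
  have hcoeff : (Polynomial.reflect m' f).coeff m' = f.coeff 0 := by
    rw [Polynomial.coeff_reflect, Polynomial.revAt_le (le_refl m'), Nat.sub_self]
  have hgd : 1 ≤ (Polynomial.reflect m' f).natDegree := by
    have := Polynomial.le_natDegree_of_ne_zero (n := m') (p := Polynomial.reflect m' f)
      (by rw [hcoeff]; exact h0)
    omega
  have hh : RRpoly (Polynomial.derivative (Polynomial.reflect m' f)) :=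
    RRpoly_derivative _ hg hgd
  have hhd : (Polynomial.derivative (Polynomial.reflect m' f)).natDegree ≤ m' - 1 :=
    le_trans (Polynomial.natDegree_derivative_le _)
      (Nat.sub_le_sub_right (natDegree_reflect_le f m' hdeg) 1)
  exact ⟨RRpoly_reflect _ _ hhd hh, natDegree_reflect_le _ _ hhd⟩

noncomputable def iterStep (m : ℕ) (f : Polynomial ℝ) : ℕ → Polynomial ℝ
  | 0 => f
  | i + 1 => step1 (m - i) (iterStep m f i)

lemma iterStep_props (m : ℕ) (f : Polynomial ℝ) (h0 : 0 < f.coeff 0)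
    (hdeg : f.natDegree ≤ m) (hrr : RRpoly f) :
    ∀ i, i ≤ m → RRpoly (iterStep m f i) ∧ (iterStep m f i).natDegree ≤ m - i ∧
      ∀ j, (iterStep m f i).coeff j = ((m - j).descFactorial i : ℝ) * f.coeff j := by
  intro i
  induction i with
  | zero =>
    intro _
    refine ⟨hrr, by simpa [iterStep] using hdeg, fun j => by simp [iterStep]⟩
  | succ i ih =>
    intro hi
    obtain ⟨hrr', hdeg', hcoeff'⟩ := ih (by omega)
    have hm' : 1 ≤ m - i := by omega
    have h0' : (iterStep m f i).coeff 0 ≠ 0 := by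
      rw [hcoeff' 0]
      have h1 : (m - 0).descFactorial i ≠ 0 := by
        rw [Ne, Nat.descFactorial_eq_zero_iff_lt]
        omega
      have h2 : (0 : ℝ) < ((m - 0).descFactorial i : ℝ) := by
        exact_mod_cast Nat.pos_of_ne_zero h1
      positivity
    have hdeg'' : (iterStep m f i).natDegree ≤ m - i := hdeg'
    obtain ⟨hrrS, hdegS⟩ := step1_props (m - i) (iterStep m f i) hm' h0' hdeg'' hrr'
    refine ⟨hrrS, ?_, ?_⟩
    · show (step1 (m - i) (iterStep m f i)).natDegree ≤ m - (i + 1)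
      have : m - i - 1 = m - (i + 1) := by omega
      rw [← this]; exact hdegS
    · intro j
      show (step1 (m - i) (iterStep m f i)).coeff j = _
      rw [step1_coeff (m - i) _ hm' hdeg'' j, hcoeff' j]
      have h1 : m - i - j = m - j - i := by omega
      rw [h1, Nat.descFactorial_succ]
      push_cast
      ring

end RenegarAux

namespace RenegarAux

open Polynomial

lemma aeval_homogenize {d m : ℕ} (p : MvPolynomial (Fin d) ℝ) (y : Fin (d + 1) → ℂ) :
    MvPolynomial.aeval y (homogenize m p) =
      ∑ κ ∈ p.support, (algebraMap ℝ ℂ) (MvPolynomial.coeff κ p) *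
        ((∏ i ∈ κ.support, y i.succ ^ κ i) * y 0 ^ (m - κ.sum fun _ e => e)) := by
  rw [_root_.homogenize, map_sum]
  apply Finset.sum_congr rfl
  intro κ _
  rw [MvPolynomial.aeval_monomial]
  congr 1
  rw [Finsupp.prod_add_index' (fun a => pow_zero (y a)) (fun a b₁ b₂ => pow_add (y a) b₁ b₂),
    Finsupp.prod_single_index (h := fun a b => y a ^ b) (pow_zero (y 0)),
    Finsupp.prod_mapDomain_index_inj (Fin.succ_injective d)]
  rfl

lemma aeval_support_sum {d : ℕ} (p : MvPolynomial (Fin d) ℝ) (g : Fin d → ℂ) :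
    MvPolynomial.aeval g p =
      ∑ κ ∈ p.support, (algebraMap ℝ ℂ) (MvPolynomial.coeff κ p) *
        ∏ i ∈ κ.support, g i ^ κ i := by
  rw [MvPolynomial.aeval_def, MvPolynomial.eval₂_eq]

lemma natDegree_aeval_linear_le {d : ℕ} (p : MvPolynomial (Fin d) ℝ) (a b : Fin d → ℝ) :
    (MvPolynomial.aeval (fun i => Polynomial.C (a i) + Polynomial.X * Polynomial.C (b i))
      p).natDegree ≤ p.totalDegree := by
  rw [MvPolynomial.aeval_def, MvPolynomial.eval₂_eq]
  apply Polynomial.natDegree_sum_le_of_forall_le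
  intro κ hκ
  apply le_trans (Polynomial.natDegree_mul_le)
  have h1 : (algebraMap ℝ ℝ[X] (MvPolynomial.coeff κ p)).natDegree = 0 := by
    rw [Polynomial.algebraMap_eq, Polynomial.natDegree_C]
  rw [h1, zero_add]
  apply le_trans (Polynomial.natDegree_prod_le _ _)
  have h2 : ∀ i ∈ κ.support,
      ((Polynomial.C (a i) + Polynomial.X * Polynomial.C (b i)) ^ κ i).natDegree ≤ κ i := by
    intro i _
    apply le_trans (Polynomial.natDegree_pow_le)
    have : (Polynomial.C (a i) + Polynomial.X * Polynomial.C (b i)).natDegree ≤ 1 := by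
      apply le_trans (Polynomial.natDegree_add_le _ _)
      simp only [Polynomial.natDegree_C, max_le_iff]
      constructor
      · omega
      · exact le_trans (Polynomial.natDegree_mul_le) (by simp)
    calc κ i * (Polynomial.C (a i) + Polynomial.X * Polynomial.C (b i)).natDegree
        ≤ κ i * 1 := Nat.mul_le_mul_left _ this
      _ = κ i := Nat.mul_one _
  apply le_trans (Finset.sum_le_sum h2)
  exact MvPolynomial.le_totalDegree hκ

lemma iterDeriv_one_add_X_pow (n j : ℕ) :
    (fun q : Polynomial ℂ => Polynomial.derivative q)^[n] ((1 + Polynomial.X) ^ j)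
      = (j.descFactorial n : Polynomial ℂ) * (1 + Polynomial.X) ^ (j - n) := by
  induction n with
  | zero => simp
  | succ n ih =>
    rw [Function.iterate_succ_apply', ih]
    have hd1 : Polynomial.derivative (1 + Polynomial.X : Polynomial ℂ) = 1 := by simp
    have hc : ((j.descFactorial n : ℕ) : Polynomial ℂ) =
        Polynomial.C ((j.descFactorial n : ℕ) : ℂ) := by
      rw [Polynomial.C_eq_natCast]
    rw [hc, Polynomial.derivative_C_mul, Polynomial.derivative_pow, hd1, mul_one]
    have h1 : j - n - 1 = j - (n + 1) := by omega
    rw [h1, Nat.descFactorial_succ, Polynomial.C_eq_natCast, Polynomial.C_eq_natCast]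
    push_cast
    ring

lemma iterate_derivative_map' {A B : Type*} [CommSemiring A] [CommSemiring B] (σ : A →+* B)
    (n : ℕ) (q : Polynomial A) :
    ((fun q => Polynomial.derivative q)^[n] q).map σ
      = (fun q => Polynomial.derivative q)^[n] (q.map σ) := by
  induction n generalizing q with
  | zero => rfl
  | succ n ih =>
    rw [Function.iterate_succ_apply, Function.iterate_succ_apply, ih,
      Polynomial.derivative_map]

lemma iterate_derivative_finset_sum (n : ℕ) (sfin : Finset ℕ) (g : ℕ → Polynomial ℂ) :
    (fun q => Polynomial.derivative q)^[n] (∑ j ∈ sfin, g j)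
      = ∑ j ∈ sfin, (fun q => Polynomial.derivative q)^[n] (g j) := by
  induction n with
  | zero => rfl
  | succ n ih =>
    rw [Function.iterate_succ_apply', ih, Polynomial.derivative_sum]
    apply Finset.sum_congr rfl
    intro j _
    rw [Function.iterate_succ_apply']

lemma renegar_line {d m : ℕ} (p : MvPolynomial (Fin d) ℝ) (x0 : Fin d → ℝ) (k : ℕ)
    (hm : p.totalDegree ≤ m) (x : Fin d → ℝ) (t : ℂ) :
    MvPolynomial.aeval (fun i => (x0 i : ℂ) + t * (x i : ℂ)) (renegarDeriv m p x0 k) =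
      ∑ j ∈ Finset.range (m + 1),
        (algebraMap ℝ ℂ) ((MvPolynomial.aeval
            (fun i => Polynomial.C (x0 i) + Polynomial.X * Polynomial.C (x i)) p).coeff j)
          * t ^ j * ((m - j).descFactorial k : ℂ) := by
  set w : Fin (d + 1) → ℂ := Fin.cons 1 (fun i => (x0 i : ℂ) + t * (x i : ℂ)) with hw
  set vC : Fin (d + 1) → ℂ := Fin.cons 1 (fun i => (x0 i : ℂ)) with hv
  set f : Polynomial ℝ := MvPolynomial.aeval
      (fun i => Polynomial.C (x0 i) + Polynomial.X * Polynomial.C (x i)) p with hfdef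
  set F : Polynomial ℂ := f.map (algebraMap ℝ ℂ) with hFdef
  set τ : Fin (d + 1) → Polynomial ℂ :=
      fun α => Polynomial.C (w α) + Polynomial.X * Polynomial.C (vC α) with hτ
  set R : Polynomial ℂ := MvPolynomial.aeval τ (homogenize m p) with hRdef
  set S : Polynomial ℂ := ∑ j ∈ Finset.range (m + 1),
      Polynomial.C ((algebraMap ℝ ℂ) (f.coeff j) * t ^ j) * (1 + Polynomial.X) ^ (m - j)
    with hSdef
  -- Step A : the left hand side equals eval 0 (derivative^[k] R)
  have hA : MvPolynomial.aeval (fun i => (x0 i : ℂ) + t * (x i : ℂ)) (renegarDeriv m p x0 k)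
      = Polynomial.eval 0 ((fun q => Polynomial.derivative q)^[k] R) := by
    rw [renegarDeriv]
    have e1 : (MvPolynomial.aeval (R := ℝ) (fun i => (x0 i : ℂ) + t * (x i : ℂ))).comp
        (MvPolynomial.aeval (Fin.cons (1 : MvPolynomial (Fin d) ℝ) MvPolynomial.X))
        = MvPolynomial.aeval w := by
      rw [MvPolynomial.comp_aeval]
      congr 1
      funext α
      refine Fin.cases ?_ (fun i => ?_) α
      · simp [hw]
      · simp [hw]
    have e1' := congrFun (congrArg DFunLike.coe e1)
      (Polynomial.eval 0 ((fun q => Polynomial.derivative q)^[k]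
        (MvPolynomial.aeval
          (fun α => Polynomial.C (MvPolynomial.X α) +
            Polynomial.X * Polynomial.C (MvPolynomial.C (Fin.cons (1 : ℝ) x0 α)))
          (homogenize m p))))
    rw [AlgHom.comp_apply] at e1'
    rw [e1']
    have e2 : ∀ q : Polynomial (MvPolynomial (Fin (d + 1)) ℝ),
        MvPolynomial.aeval w (Polynomial.eval 0 q)
          = Polynomial.eval 0 (q.map (MvPolynomial.aeval w).toRingHom) := by
      intro q
      rw [← Polynomial.coeff_zero_eq_eval_zero, ← Polynomial.coeff_zero_eq_eval_zero,
        Polynomial.coeff_map]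
      rfl
    rw [e2]
    congr 1
    rw [iterate_derivative_map']
    congr 1
    have e4 : (Polynomial.mapAlgHom (MvPolynomial.aeval w)).comp
        (MvPolynomial.aeval (fun α => Polynomial.C (MvPolynomial.X α) +
          Polynomial.X * Polynomial.C (MvPolynomial.C (Fin.cons (1 : ℝ) x0 α))))
        = MvPolynomial.aeval τ := by
      rw [MvPolynomial.comp_aeval]
      congr 1
      funext α
      rw [Polynomial.coe_mapAlgHom]
      rw [Polynomial.map_add, Polynomial.map_mul, Polynomial.map_C, Polynomial.map_C,
        Polynomial.map_X, hτ]
      simp only [MvPolynomial.aeval_X, MvPolynomial.aeval_C, AlgHom.coe_toRingHom]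
      congr 2
      refine Fin.cases ?_ (fun i => ?_) α
      · simp [hv]
      · simp [hv]
    have e4' := congrFun (congrArg DFunLike.coe e4) (homogenize m p)
    rw [AlgHom.comp_apply, Polynomial.coe_mapAlgHom] at e4'
    rw [← hRdef] at e4'
    exact e4'
  -- Step B : R = S
  have hfd : f.natDegree ≤ m := le_trans (natDegree_aeval_linear_le p x0 x) hm
  have hFd : F.natDegree ≤ m := le_trans Polynomial.natDegree_map_le hfd
  have hevalR : ∀ s : ℂ, Polynomial.eval s R
      = MvPolynomial.aeval (fun α => w α + s * vC α) (homogenize m p) := by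
    intro s
    have e5 : ((Polynomial.aeval s : Polynomial ℂ →ₐ[ℂ] ℂ).restrictScalars ℝ).comp
        (MvPolynomial.aeval τ) = MvPolynomial.aeval (fun α => w α + s * vC α) := by
      rw [MvPolynomial.comp_aeval]
      congr 1
      funext α
      show Polynomial.aeval s (τ α) = w α + s * vC α
      rw [hτ]
      simp only [map_add, map_mul, Polynomial.aeval_C, Polynomial.aeval_X,
        Algebra.algebraMap_self, RingHom.id_apply]
    have e5' := congrFun (congrArg DFunLike.coe e5) (homogenize m p)
    rw [AlgHom.comp_apply] at e5'
    have : ((Polynomial.aeval s : Polynomial ℂ →ₐ[ℂ] ℂ).restrictScalars ℝ)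
        (MvPolynomial.aeval τ (homogenize m p)) = Polynomial.eval s R := by
      rw [hRdef]
      show Polynomial.aeval s (MvPolynomial.aeval τ (homogenize m p)) = _
      rw [Polynomial.coe_aeval_eq_eval]
    rw [← this]
    exact e5'
  have hevalS : ∀ s : ℂ, Polynomial.eval s S
      = ∑ j ∈ Finset.range (m + 1),
          (algebraMap ℝ ℂ) (f.coeff j) * t ^ j * (1 + s) ^ (m - j) := by
    intro s
    rw [hSdef, Polynomial.eval_finset_sum]
    apply Finset.sum_congr rfl
    intro j _
    simp [mul_assoc]
  have hRS : R = S := by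
    have hroot : ∀ s : ℂ, s ≠ -1 → Polynomial.eval s R = Polynomial.eval s S := by
      intro s hs
      have h1s : (1 : ℂ) + s ≠ 0 := by
        intro h
        apply hs
        have := eq_neg_of_add_eq_zero_right h
        simpa using this
      set u : ℂ := t / (1 + s) with hu
      have hut : (1 + s) * u = t := by
        rw [hu]; field_simp
      have hmid : Polynomial.eval u F
          = MvPolynomial.aeval (fun i => (x0 i : ℂ) + u * (x i : ℂ)) p := by
        have e6 : ((Polynomial.aeval u : Polynomial ℝ →ₐ[ℝ] ℂ)).comp
            (MvPolynomial.aeval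
              (fun i => Polynomial.C (x0 i) + Polynomial.X * Polynomial.C (x i)))
            = MvPolynomial.aeval (fun i => (x0 i : ℂ) + u * (x i : ℂ)) := by
          rw [MvPolynomial.comp_aeval]
          congr 1
          funext i
          simp only [map_add, map_mul, Polynomial.aeval_C, Polynomial.aeval_X,
            Complex.coe_algebraMap]
        have e6' := congrFun (congrArg DFunLike.coe e6) p
        rw [AlgHom.comp_apply] at e6'
        rw [← e6', ← hfdef, hFdef, ← Polynomial.eval₂_eq_eval_map, ← Polynomial.aeval_def]
      rw [hevalR s, hevalS s, aeval_homogenize p]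
      have hmid2 := aeval_support_sum p (fun i => (x0 i : ℂ) + u * (x i : ℂ))
      have hleft : ∑ κ ∈ p.support, (algebraMap ℝ ℂ) (MvPolynomial.coeff κ p) *
            ((∏ i ∈ κ.support, ((fun α => w α + s * vC α) i.succ) ^ κ i) *
              ((fun α => w α + s * vC α) 0) ^ (m - κ.sum fun _ e => e))
          = (1 + s) ^ m * Polynomial.eval u F := by
        rw [hmid, hmid2, Finset.mul_sum]
        apply Finset.sum_congr rfl
        intro κ hκ
        have hκm : (κ.sum fun _ e => e) ≤ m := le_trans (MvPolynomial.le_totalDegree hκ) hm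
        have hw0 : w 0 + s * vC 0 = 1 + s := by simp [hw, hv]
        have hwi : ∀ i ∈ κ.support, (w i.succ + s * vC i.succ) ^ κ i
            = (((x0 i : ℂ) + t * x i) + s * (x0 i : ℂ)) ^ κ i := by
          intro i _
          simp [hw, hv]
        simp only [hw0]
        rw [Finset.prod_congr rfl hwi]
        have hsum : (κ.sum fun _ e => e) = ∑ i ∈ κ.support, κ i := rfl
        have hpowm : ((1 : ℂ) + s) ^ m
            = (1 + s) ^ (m - κ.sum fun _ e => e) * ∏ i ∈ κ.support, (1 + s) ^ κ i := by
          rw [Finset.prod_pow_eq_pow_sum, ← pow_add, ← hsum]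
          congr 1
          omega
        have hterm : ∀ i ∈ κ.support, (((x0 i : ℂ) + t * x i) + s * (x0 i : ℂ)) ^ κ i
            = (1 + s) ^ κ i * ((x0 i : ℂ) + u * x i) ^ κ i := by
          intro i _
          rw [← mul_pow]
          congr 1
          calc ((x0 i : ℂ) + t * x i) + s * (x0 i : ℂ)
              = (x0 i : ℂ) + s * x0 i + ((1 + s) * u) * x i := by rw [hut]; ring
            _ = (1 + s) * ((x0 i : ℂ) + u * x i) := by ring
        rw [Finset.prod_congr rfl hterm, Finset.prod_mul_distrib, hpowm]
        ring
      have hright : ∑ j ∈ Finset.range (m + 1),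
            (algebraMap ℝ ℂ) (f.coeff j) * t ^ j * (1 + s) ^ (m - j)
          = (1 + s) ^ m * Polynomial.eval u F := by
        rw [Polynomial.eval_eq_sum_range' (lt_of_le_of_lt hFd (Nat.lt_succ_self m)),
          Finset.mul_sum]
        apply Finset.sum_congr rfl
        intro j hj
        rw [Finset.mem_range] at hj
        have hj' : j ≤ m := by omega
        rw [hFdef, Polynomial.coeff_map]
        have ht : t ^ j = (1 + s) ^ j * u ^ j := by rw [← mul_pow, hut]
        have hp : ((1 : ℂ) + s) ^ m = (1 + s) ^ (m - j) * (1 + s) ^ j := by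
          rw [← pow_add]; congr 1; omega
        rw [ht, hp]
        ring
      exact hleft.trans hright.symm
    have hsub : {s : ℂ | s ≠ -1} ⊆ {s : ℂ | (R - S).IsRoot s} := by
      intro s hs
      simp only [Set.mem_setOf_eq, Polynomial.IsRoot, Polynomial.eval_sub]
      rw [hroot s hs, sub_self]
    have hinf : ({s : ℂ | s ≠ -1}).Infinite := by
      have : {s : ℂ | s ≠ -1} = ({-1} : Set ℂ)ᶜ := by
        ext s; simp
      rw [this]
      exact (Set.finite_singleton _).infinite_compl
    have h0 := Polynomial.eq_zero_of_infinite_isRoot (R - S) (hinf.mono hsub)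
    exact sub_eq_zero.mp h0
  -- Step C : evaluate
  rw [hA, hRS]
  rw [hSdef, iterate_derivative_finset_sum, Polynomial.eval_finset_sum]
  apply Finset.sum_congr rfl
  intro j _
  rw [show (fun q : Polynomial ℂ => Polynomial.derivative q) = ⇑Polynomial.derivative from rfl,
    Polynomial.iterate_derivative_C_mul,
    show ⇑Polynomial.derivative = (fun q : Polynomial ℂ => Polynomial.derivative q) from rfl,
    iterDeriv_one_add_X_pow]
  simp [mul_assoc]

end RenegarAux


namespace RenegarAux

lemma mv_aeval_eq_eval {n : ℕ} (a : Fin n → ℝ) (q : MvPolynomial (Fin n) ℝ) :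
    MvPolynomial.aeval a q = MvPolynomial.eval a q := by
  rw [MvPolynomial.aeval_def, Algebra.algebraMap_self]
  rfl

lemma coeff_zero_aeval_linear {d : ℕ} (p : MvPolynomial (Fin d) ℝ) (a b : Fin d → ℝ) :
    (MvPolynomial.aeval
      (fun i => Polynomial.C (a i) + Polynomial.X * Polynomial.C (b i)) p).coeff 0
      = MvPolynomial.eval a p := by
  rw [Polynomial.coeff_zero_eq_eval_zero]
  have e : ((Polynomial.aeval (0 : ℝ) : Polynomial ℝ →ₐ[ℝ] ℝ)).comp
      (MvPolynomial.aeval (fun i => Polynomial.C (a i) + Polynomial.X * Polynomial.C (b i)))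
      = MvPolynomial.aeval a := by
    rw [MvPolynomial.comp_aeval]
    congr 1
    funext i
    simp
  have e2 := congrFun (congrArg DFunLike.coe e) p
  rw [AlgHom.comp_apply] at e2
  rw [← Polynomial.coe_aeval_eq_eval]
  rw [e2, mv_aeval_eq_eval]

end RenegarAux

/-- If `p` is an `RZ_{x⁰}` polynomial of degree `m` with `p(x⁰) > 0` and
`1 ≤ k ≤ m - 1`, then the `k`-th Renegar derivative of `p` with respect to `x⁰`
is an `RZ_{x⁰}` polynomial that is positive at `x⁰`. -/
theorem stmt5 {d m : ℕ} (p : MvPolynomial (Fin d) ℝ) (x0 : Fin d → ℝ)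
    (hdeg : p.totalDegree = m) (hRZ : IsRZ p x0)
    (hpos : 0 < MvPolynomial.eval x0 p)
    (k : ℕ) (hk1 : 1 ≤ k) (hk2 : k ≤ m - 1) :
    IsRZ (renegarDeriv m p x0 k) x0 ∧
      0 < MvPolynomial.eval x0 (renegarDeriv m p x0 k) := by
  classical
  have hm : p.totalDegree ≤ m := le_of_eq hdeg
  have hkm : k ≤ m := le_trans hk2 (Nat.sub_le m 1)
  have hdFpos : 0 < ((m.descFactorial k : ℕ) : ℝ) := by
    have : m.descFactorial k ≠ 0 := by
      rw [Ne, Nat.descFactorial_eq_zero_iff_lt]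
      omega
    exact_mod_cast Nat.pos_of_ne_zero this
  -- properties of the restriction of `p` to the line through `x0` in direction `x`
  have main : ∀ x : Fin d → ℝ,
      RRpoly (MvPolynomial.aeval
        (fun i => Polynomial.C (x0 i) + Polynomial.X * Polynomial.C (x i)) p) ∧
      (MvPolynomial.aeval
        (fun i => Polynomial.C (x0 i) + Polynomial.X * Polynomial.C (x i)) p).coeff 0
        = MvPolynomial.eval x0 p := by
    intro x
    constructor
    · intro z hz
      apply hRZ x z
      have e6 : ((Polynomial.aeval z : Polynomial ℝ →ₐ[ℝ] ℂ)).comp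
          (MvPolynomial.aeval
            (fun i => Polynomial.C (x0 i) + Polynomial.X * Polynomial.C (x i)))
          = MvPolynomial.aeval (fun i => (x0 i : ℂ) + z * (x i : ℂ)) := by
        rw [MvPolynomial.comp_aeval]
        congr 1
        funext i
        simp only [map_add, map_mul, Polynomial.aeval_C, Polynomial.aeval_X,
          Complex.coe_algebraMap]
      have e6' := congrFun (congrArg DFunLike.coe e6) p
      rw [AlgHom.comp_apply] at e6'
      rw [← e6']
      exact hz
    · exact RenegarAux.coeff_zero_aeval_linear p x0 x
  constructor
  · -- the Renegar derivative satisfies the real zero condition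
    intro x t ht
    set f : Polynomial ℝ := MvPolynomial.aeval
      (fun i => Polynomial.C (x0 i) + Polynomial.X * Polynomial.C (x i)) p with hfdef
    obtain ⟨hrr, hc0⟩ := main x
    have h0 : 0 < f.coeff 0 := by rw [hfdef, hc0]; exact hpos
    have hfd : f.natDegree ≤ m :=
      le_trans (RenegarAux.natDegree_aeval_linear_le p x0 x) hm
    obtain ⟨hrrk, hdegk, hcoeffk⟩ :=
      RenegarAux.iterStep_props m f h0 hfd hrr k hkm
    apply hrrk t
    rw [RenegarAux.renegar_line p x0 k hm x t] at ht
    rw [RenegarAux.aeval_eq_eval_map]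
    have hdmap : ((RenegarAux.iterStep m f k).map (algebraMap ℝ ℂ)).natDegree < m + 1 := by
      have h1 : ((RenegarAux.iterStep m f k).map (algebraMap ℝ ℂ)).natDegree
          ≤ (RenegarAux.iterStep m f k).natDegree := Polynomial.natDegree_map_le
      omega
    rw [Polynomial.eval_eq_sum_range' hdmap]
    have : ∑ j ∈ Finset.range (m + 1),
          ((RenegarAux.iterStep m f k).map (algebraMap ℝ ℂ)).coeff j * t ^ j
        = ∑ j ∈ Finset.range (m + 1),
            (algebraMap ℝ ℂ) (f.coeff j) * t ^ j * ((m - j).descFactorial k : ℂ) := by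
      apply Finset.sum_congr rfl
      intro j _
      rw [Polynomial.coeff_map, hcoeffk j, map_mul, map_natCast]
      ring
    rw [this]
    exact ht
  · -- positivity at `x0`
    have hline := RenegarAux.renegar_line p x0 k hm (fun _ => (0 : ℝ)) 0
    set f0 : Polynomial ℝ := MvPolynomial.aeval
      (fun i => Polynomial.C (x0 i) + Polynomial.X * Polynomial.C ((0 : ℝ))) p with hf0def
    have hc0 : f0.coeff 0 = MvPolynomial.eval x0 p :=
      RenegarAux.coeff_zero_aeval_linear p x0 (fun _ => 0)
    have hL : MvPolynomial.aeval
        (fun i => (x0 i : ℂ) + (0 : ℂ) * (((fun _ => (0 : ℝ)) i : ℝ) : ℂ))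
        (renegarDeriv m p x0 k)
        = algebraMap ℝ ℂ (MvPolynomial.eval x0 (renegarDeriv m p x0 k)) := by
      have e7 : ((Algebra.ofId ℝ ℂ)).comp (MvPolynomial.aeval x0)
          = MvPolynomial.aeval
              (fun i => (x0 i : ℂ) + (0 : ℂ) * (((fun _ => (0 : ℝ)) i : ℝ) : ℂ)) := by
        rw [MvPolynomial.comp_aeval]
        congr 1
        funext i
        simp [Algebra.ofId_apply]
      have e7' := congrFun (congrArg DFunLike.coe e7) (renegarDeriv m p x0 k)
      rw [AlgHom.comp_apply] at e7'
      rw [← e7', RenegarAux.mv_aeval_eq_eval]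
      rfl
    have hR : ∑ j ∈ Finset.range (m + 1),
          (algebraMap ℝ ℂ) (f0.coeff j) * (0 : ℂ) ^ j * ((m - j).descFactorial k : ℂ)
        = algebraMap ℝ ℂ (f0.coeff 0) * ((m.descFactorial k : ℕ) : ℂ) := by
      rw [Finset.sum_eq_single 0]
      · simp
      · intro j _ hj0
        rw [zero_pow hj0]
        ring
      · intro h
        exact absurd (Finset.mem_range.mpr (Nat.succ_pos m)) h
    rw [hL, hR] at hline
    have key : MvPolynomial.eval x0 (renegarDeriv m p x0 k)
        = MvPolynomial.eval x0 p * ((m.descFactorial k : ℕ) : ℝ) := by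
      have : algebraMap ℝ ℂ (MvPolynomial.eval x0 (renegarDeriv m p x0 k))
          = algebraMap ℝ ℂ (MvPolynomial.eval x0 p * ((m.descFactorial k : ℕ) : ℝ)) := by
        rw [hline, hc0, map_mul, map_natCast]
      exact (algebraMap ℝ ℂ).injective this
    rw [key]
    positivity
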